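/- Let k ≥ 3 be an integer and set k' = ⌊(k−1)/2⌋. Then the k'×k' real matrix M with entries M_{i,j} = ∫_0^∞ I_0(t)^i · K_0(t)^{k−i} · t^{2j−1} dt, for 1 ≤ i, j ≤ k', is invertible. -/

import Mathlib

open MeasureTheory

/-- The modified Bessel function of the first kind of order zero,
`I₀(t) = (1/π) ∫_0^π exp(t cos θ) dθ`. -/
noncomputable def I0 (t : ℝ) : ℝ :=
  (1 / Real.pi) * ∫ θ in (0 : ℝ)..Real.pi, Real.exp (t * Real.cos θ)

/-- The modified Bessel function of the second kind of order zero,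
`K₀(t) = ∫_0^∞ exp(−t cosh u) du`. -/
noncomputable def K0 (t : ℝ) : ℝ :=
  ∫ u in Set.Ioi (0 : ℝ), Real.exp (-(t * Real.cosh u))

open Real Set Filter Matrix




lemma cosh_ge_self (u : ℝ) (hu : 0 ≤ u) : u ≤ Real.cosh u :=
  (Real.self_le_sinh_iff.2 hu).trans (Real.sinh_lt_cosh u).le

lemma K0_integrand_integrable {t : ℝ} (ht : 0 < t) :
    IntegrableOn (fun u => Real.exp (-(t * Real.cosh u))) (Set.Ioi (0:ℝ)) := by
  apply Integrable.mono' (exp_neg_integrableOn_Ioi 0 ht)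
  · exact (Real.continuous_exp.comp
      (continuous_const.mul Real.continuous_cosh).neg).aestronglyMeasurable
  · filter_upwards [ae_restrict_mem measurableSet_Ioi] with u hu
    rw [Real.norm_eq_abs, abs_of_pos (Real.exp_pos _), Real.exp_le_exp]
    have := cosh_ge_self u (le_of_lt hu)
    nlinarith

lemma K0_pos {t : ℝ} (ht : 0 < t) : 0 < K0 t := by
  rw [K0, integral_pos_iff_support_of_nonneg_ae
    (Filter.Eventually.of_forall fun u => (Real.exp_pos _).le) (K0_integrand_integrable ht)]
  have hs : Function.support (fun u : ℝ => Real.exp (-(t * Real.cosh u))) = Set.univ := by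
    ext u; simp [(Real.exp_pos _).ne']
  rw [hs, Measure.restrict_apply_univ, Real.volume_Ioi]
  exact ENNReal.zero_lt_top

lemma K0_strictAnti {s t : ℝ} (hs : 0 < s) (hst : s < t) : K0 t < K0 s := by
  have h1 := K0_integrand_integrable hs
  have h2 := K0_integrand_integrable (hs.trans hst)
  have key : 0 < ∫ u in Set.Ioi (0:ℝ),
      (Real.exp (-(s * Real.cosh u)) - Real.exp (-(t * Real.cosh u))) := by
    rw [integral_pos_iff_support_of_nonneg_ae]
    · have hs' : Function.support (fun u : ℝ =>
          Real.exp (-(s * Real.cosh u)) - Real.exp (-(t * Real.cosh u))) = Set.univ := by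
        ext u
        have hc := Real.one_le_cosh u
        have : Real.exp (-(t * Real.cosh u)) < Real.exp (-(s * Real.cosh u)) := by
          rw [Real.exp_lt_exp]; nlinarith
        simp only [Function.mem_support, Set.mem_univ, iff_true]
        exact sub_ne_zero.2 this.ne'
      rw [hs', Measure.restrict_apply_univ, Real.volume_Ioi]
      exact ENNReal.zero_lt_top
    · apply Filter.Eventually.of_forall
      intro u
      simp only [Pi.zero_apply]
      have hc := Real.one_le_cosh u
      have : Real.exp (-(t * Real.cosh u)) ≤ Real.exp (-(s * Real.cosh u)) := by
        rw [Real.exp_le_exp]; nlinarith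
      linarith
    · exact h1.sub h2
  rw [integral_sub h1 h2] at key
  rw [K0, K0]; linarith

lemma I0_pos (t : ℝ) : 0 < I0 t := by
  rw [I0]
  apply mul_pos (by positivity)
  apply intervalIntegral.intervalIntegral_pos_of_pos_on
  · exact (Real.continuous_exp.comp (continuous_const.mul Real.continuous_cos)).intervalIntegrable _ _
  · exact fun x _ => Real.exp_pos _
  · exact Real.pi_pos

lemma I0_le_exp {t : ℝ} (ht : 0 ≤ t) : I0 t ≤ Real.exp t := by
  rw [I0]
  have h : (∫ θ in (0:ℝ)..Real.pi, Real.exp (t * Real.cos θ)) ≤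
      ∫ _θ in (0:ℝ)..Real.pi, Real.exp t := by
    apply intervalIntegral.integral_mono_on Real.pi_pos.le
    · exact (Real.continuous_exp.comp
        (continuous_const.mul Real.continuous_cos)).intervalIntegrable _ _
    · exact intervalIntegrable_const
    · intro x _
      rw [Real.exp_le_exp]
      nlinarith [Real.cos_le_one x, Real.neg_one_le_cos x]
  rw [intervalIntegral.integral_const, smul_eq_mul, sub_zero] at h
  calc (1 / Real.pi) * ∫ θ in (0:ℝ)..Real.pi, Real.exp (t * Real.cos θ)
      ≤ (1 / Real.pi) * (Real.pi * Real.exp t) := by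
        apply mul_le_mul_of_nonneg_left h (by positivity)
    _ = Real.exp t := by field_simp

lemma I0_cosh_rep (t : ℝ) :
    I0 t = (1 / Real.pi) * ∫ θ in (0:ℝ)..(Real.pi/2), 2 * Real.cosh (t * Real.cos θ) := by
  rw [I0]
  congr 1
  have hsplit : (∫ θ in (0:ℝ)..Real.pi, Real.exp (t * Real.cos θ)) =
      (∫ θ in (0:ℝ)..(Real.pi/2), Real.exp (t * Real.cos θ)) +
      ∫ θ in (Real.pi/2)..Real.pi, Real.exp (t * Real.cos θ) := by
    rw [intervalIntegral.integral_add_adjacent_intervals] <;>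
      exact (Real.continuous_exp.comp
        (continuous_const.mul Real.continuous_cos)).intervalIntegrable _ _
  have hrefl : (∫ θ in (Real.pi/2)..Real.pi, Real.exp (t * Real.cos θ)) =
      ∫ θ in (0:ℝ)..(Real.pi/2), Real.exp (-(t * Real.cos θ)) := by
    have := intervalIntegral.integral_comp_sub_left
      (fun x => Real.exp (t * Real.cos x)) Real.pi (a := 0) (b := Real.pi/2)
    rw [show Real.pi - Real.pi/2 = Real.pi/2 by ring, sub_zero] at this
    rw [← this]
    congr 1
    ext x
    rw [Real.cos_pi_sub]
    ring_nf
  rw [hsplit, hrefl, ← intervalIntegral.integral_add]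
  · congr 1
    ext θ
    rw [Real.cosh_eq]
    ring
  · exact (Real.continuous_exp.comp
      (continuous_const.mul Real.continuous_cos)).intervalIntegrable _ _
  · exact ((Real.continuous_exp.comp
      (continuous_const.mul Real.continuous_cos).neg)).intervalIntegrable _ _

lemma I0_mono {s t : ℝ} (hs : 0 ≤ s) (hst : s ≤ t) : I0 s ≤ I0 t := by
  rw [I0_cosh_rep, I0_cosh_rep]
  apply mul_le_mul_of_nonneg_left _ (by positivity)
  apply intervalIntegral.integral_mono_on (by positivity)
  · exact (continuous_const.mul (Real.continuous_cosh.comp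
      (continuous_const.mul Real.continuous_cos))).intervalIntegrable _ _
  · exact (continuous_const.mul (Real.continuous_cosh.comp
      (continuous_const.mul Real.continuous_cos))).intervalIntegrable _ _
  · intro x hx
    have hcos : 0 ≤ Real.cos x := Real.cos_nonneg_of_mem_Icc
      ⟨by linarith [hx.1, Real.pi_pos], hx.2⟩
    have : s * Real.cos x ≤ t * Real.cos x := mul_le_mul_of_nonneg_right hst hcos
    have habs : |s * Real.cos x| ≤ |t * Real.cos x| := by
      rw [abs_of_nonneg (by positivity), abs_of_nonneg (by nlinarith)]
      exact this
    have := Real.cosh_le_cosh.2 habs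
    linarith





lemma I0_continuous : Continuous I0 := by
  apply continuous_const.mul
  rw [continuous_iff_continuousAt]
  intro x₀
  apply intervalIntegral.continuousAt_of_dominated_interval
    (bound := fun _ => Real.exp (|x₀| + 1))
  · exact Eventually.of_forall fun x => (Real.continuous_exp.comp
      (continuous_const.mul Real.continuous_cos)).aestronglyMeasurable
  · have h1 : ∀ᶠ x in nhds x₀, |x - x₀| < 1 := by
      have := Metric.ball_mem_nhds x₀ one_pos
      filter_upwards [this] with x hx
      simpa [Real.dist_eq] using hx
    filter_upwards [h1] with x hx
    apply Eventually.of_forall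
    intro θ _
    rw [Real.norm_eq_abs, abs_of_pos (Real.exp_pos _), Real.exp_le_exp]
    have h2 : |x| ≤ |x₀| + 1 := by
      have := abs_sub_abs_le_abs_sub x x₀
      linarith
    have h3 : x * Real.cos θ ≤ |x| := by
      calc x * Real.cos θ ≤ |x * Real.cos θ| := le_abs_self _
        _ = |x| * |Real.cos θ| := abs_mul _ _
        _ ≤ |x| * 1 := by
            apply mul_le_mul_of_nonneg_left (Real.abs_cos_le_one θ) (abs_nonneg _)
        _ = |x| := mul_one _
    linarith
  · exact intervalIntegrable_const
  · apply Eventually.of_forall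
    intro θ _
    exact (Real.continuous_exp.comp (continuous_id.mul continuous_const)).continuousAt

lemma K0_continuousAt {t₀ : ℝ} (h : 0 < t₀) : ContinuousAt K0 t₀ := by
  apply MeasureTheory.continuousAt_of_dominated
    (bound := fun u => Real.exp (-(t₀ / 2 * Real.cosh u)))
  · exact Eventually.of_forall fun t => (Real.continuous_exp.comp
      (continuous_const.mul Real.continuous_cosh).neg).aestronglyMeasurable
  · filter_upwards [eventually_gt_nhds (half_lt_self h)] with t ht
    apply Eventually.of_forall
    intro u
    rw [Real.norm_eq_abs, abs_of_pos (Real.exp_pos _), Real.exp_le_exp]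
    have hc : (1:ℝ) ≤ Real.cosh u := Real.one_le_cosh u
    nlinarith
  · exact K0_integrand_integrable (half_pos h)
  · apply Eventually.of_forall
    intro u
    exact (Real.continuous_exp.comp
      ((continuous_id.mul continuous_const).neg)).continuousAt

lemma K0_continuousOn : ContinuousOn K0 (Set.Ioi (0:ℝ)) :=
  fun _x hx => (K0_continuousAt hx).continuousWithinAt

lemma cosh_quad (u : ℝ) : 1 + u ^ 2 / 2 ≤ Real.cosh u := by
  rw [← Real.cosh_abs]
  have hu : 0 ≤ |u| := abs_nonneg u
  have h1 : |u| / 2 ≤ Real.sinh (|u| / 2) := Real.self_le_sinh_iff.2 (by positivity)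
  have h2 : Real.cosh (2 * (|u| / 2)) = Real.cosh (|u|/2) ^ 2 + Real.sinh (|u|/2) ^ 2 :=
    Real.cosh_two_mul _
  have h3 : Real.cosh (|u|/2) ^ 2 = Real.sinh (|u|/2) ^ 2 + 1 := Real.cosh_sq _
  have h4 : (2 : ℝ) * (|u| / 2) = |u| := by ring
  have h5 : u ^ 2 = |u| ^ 2 := (sq_abs u).symm
  rw [h4] at h2
  have h6 : (|u| / 2) ^ 2 ≤ Real.sinh (|u| / 2) ^ 2 :=
    pow_le_pow_left₀ (by positivity) h1 2
  nlinarith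

noncomputable def cKc : ℝ := ∫ u in Set.Ioi (0:ℝ), Real.exp (-((1/2 : ℝ) * u ^ 2))

lemma cKc_nonneg : 0 ≤ cKc := integral_nonneg fun u => (Real.exp_pos _).le

lemma gauss_int : IntegrableOn (fun u : ℝ => Real.exp (-((1/2 : ℝ) * u ^ 2))) (Set.Ioi 0) := by
  have := integrable_exp_neg_mul_sq (show (0:ℝ) < 1/2 by norm_num)
  exact (this.integrableOn).mono_set (Set.subset_univ _) |>.congr_fun
    (fun x _ => by ring_nf) measurableSet_Ioi

lemma K0_le_exp {t : ℝ} (ht : 1 ≤ t) : K0 t ≤ cKc * Real.exp (-t) := by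
  have h0 : (0:ℝ) < t := lt_of_lt_of_le one_pos ht
  rw [K0]
  have hb : ∀ u ∈ Set.Ioi (0:ℝ), Real.exp (-(t * Real.cosh u)) ≤
      Real.exp (-t) * Real.exp (-((1/2:ℝ) * u ^ 2)) := by
    intro u _
    rw [← Real.exp_add, Real.exp_le_exp]
    have := cosh_quad u
    nlinarith
  calc (∫ u in Set.Ioi (0:ℝ), Real.exp (-(t * Real.cosh u)))
      ≤ ∫ u in Set.Ioi (0:ℝ), Real.exp (-t) * Real.exp (-((1/2:ℝ) * u ^ 2)) := by
        apply setIntegral_mono_on (K0_integrand_integrable h0)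
          (gauss_int.const_mul _) measurableSet_Ioi hb
    _ = Real.exp (-t) * cKc := by rw [integral_const_mul]; rfl
    _ = cKc * Real.exp (-t) := mul_comm _ _

lemma exp_neg_le_rpow {x ε : ℝ} (hx : 0 < x) (hε : 0 ≤ ε) (hε1 : ε ≤ 1) :
    Real.exp (-x) ≤ x ^ (-ε) := by
  have key : x ^ ε ≤ Real.exp x := by
    rcases le_total x 1 with h | h
    · calc x ^ ε ≤ 1 := Real.rpow_le_one hx.le h hε
        _ ≤ Real.exp x := by
          rw [← Real.exp_zero]; exact Real.exp_le_exp.2 hx.le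
    · calc x ^ ε ≤ x ^ (1:ℝ) := Real.rpow_le_rpow_of_exponent_le h hε1
        _ = x := Real.rpow_one x
        _ ≤ Real.exp x := by linarith [Real.add_one_le_exp x]
  rw [Real.exp_neg, Real.rpow_neg hx.le]
  exact inv_anti₀ (Real.rpow_pos_of_pos hx ε) key

lemma K0_small {k : ℕ} (hk : 1 ≤ k) {t : ℝ} (h0 : 0 < t) :
    K0 t ≤ 4 * k * t ^ (-(1 / (2 * (k:ℝ)))) := by
  set ε : ℝ := 1 / (2 * (k:ℝ)) with hεdef
  have hkpos : (0:ℝ) < k := by exact_mod_cast hk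
  have hε : 0 < ε := by positivity
  have hk1 : (1:ℝ) ≤ k := by exact_mod_cast hk
  have hε1 : ε ≤ 1 := by
    rw [hεdef, div_le_one (by positivity)]
    nlinarith
  have hpt : ∀ u ∈ Set.Ioi (0:ℝ), Real.exp (-(t * Real.cosh u)) ≤
      (2 / t) ^ ε * Real.exp (-(ε * u)) := by
    intro u hu
    have hcosh : Real.exp u / 2 ≤ Real.cosh u := by
      rw [Real.cosh_eq]
      have := (Real.exp_pos (-u)).le
      linarith
    have hx : 0 < t / 2 * Real.exp u := by positivity
    have h1 : Real.exp (-(t * Real.cosh u)) ≤ Real.exp (-(t / 2 * Real.exp u)) := by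
      rw [Real.exp_le_exp]
      nlinarith
    have h2 : Real.exp (-(t / 2 * Real.exp u)) ≤ (t / 2 * Real.exp u) ^ (-ε) :=
      exp_neg_le_rpow hx hε.le hε1
    have h3 : (t / 2 * Real.exp u) ^ (-ε) = (2 / t) ^ ε * Real.exp (-(ε * u)) := by
      rw [Real.rpow_neg hx.le, Real.mul_rpow (by positivity) (Real.exp_pos u).le,
        mul_inv, ← Real.inv_rpow (by positivity), ← Real.inv_rpow (Real.exp_pos u).le,
        ← Real.exp_neg, ← Real.exp_mul]
      congr 2
      · rw [inv_div]
      · ring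
    linarith
  have hint : (∫ u in Set.Ioi (0:ℝ), Real.exp (-(ε * u))) = 1 / ε := by
    have := integral_comp_mul_left_Ioi (fun x => Real.exp (-x)) 0 hε
    simp only [mul_zero, smul_eq_mul] at this
    rw [this, integral_exp_neg_Ioi_zero, mul_one, one_div]
  have hK : K0 t ≤ (2/t) ^ ε * (1/ε) := by
    rw [K0, ← hint, ← integral_const_mul]
    apply setIntegral_mono_on (K0_integrand_integrable h0) _ measurableSet_Ioi hpt
    exact ((exp_neg_integrableOn_Ioi 0 hε).congr_fun
      (fun x _ => by rw [neg_mul]) measurableSet_Ioi).const_mul _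
  have h2t : (2/t) ^ ε = 2 ^ ε * t ^ (-ε) := by
    rw [Real.div_rpow (by norm_num) h0.le, Real.rpow_neg h0.le, div_eq_mul_inv]
  have h2e : (2:ℝ) ^ ε ≤ 2 := by
    calc (2:ℝ) ^ ε ≤ 2 ^ (1:ℝ) := Real.rpow_le_rpow_of_exponent_le one_le_two hε1
      _ = 2 := Real.rpow_one 2
  have h1ε : 1/ε = 2 * k := by rw [hεdef]; field_simp
  have htpos : 0 < t ^ (-ε) := Real.rpow_pos_of_pos h0 _
  calc K0 t ≤ (2/t) ^ ε * (1/ε) := hK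
    _ = 2 ^ ε * t ^ (-ε) * (2 * k) := by rw [h2t, h1ε]
    _ ≤ 2 * t ^ (-ε) * (2 * k) := by nlinarith [htpos.le, mul_le_mul_of_nonneg_right h2e htpos.le]
    _ = 4 * k * t ^ (-(1/(2*(k:ℝ)))) := by rw [← hεdef]; ring


lemma K0_pow_small {k a m : ℕ} (hk1 : 1 ≤ k) (hm : 1 ≤ m) {t : ℝ}
    (h0 : 0 < t) (ht1 : t ≤ 1) : K0 t ^ (k - a) * t ^ m ≤ (4 * k) ^ k := by
  set ε : ℝ := 1 / (2 * (k:ℝ)) with hεdef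
  have hkpos : (0:ℝ) < k := by exact_mod_cast hk1
  have hε : 0 < ε := by positivity
  have htε : (1:ℝ) ≤ t ^ (-ε) := by
    rw [Real.rpow_neg h0.le]
    exact one_le_inv_iff₀.2 ⟨Real.rpow_pos_of_pos h0 ε, Real.rpow_le_one h0.le ht1 hε.le⟩
  set B : ℝ := 4 * k * t ^ (-ε) with hBdef
  have hB1 : 1 ≤ B := by
    have hk1' : (1:ℝ) ≤ k := by exact_mod_cast hk1
    have h4k : (1:ℝ) ≤ 4 * k := by nlinarith
    calc (1:ℝ) = 1 * 1 := (mul_one 1).symm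
      _ ≤ 4 * k * t ^ (-ε) := mul_le_mul h4k htε zero_le_one (by positivity)
  have hKB : K0 t ≤ B := K0_small hk1 h0
  have h1 : K0 t ^ (k - a) ≤ B ^ (k - a) :=
    pow_le_pow_left₀ (K0_pos h0).le hKB _
  have h2 : B ^ (k - a) ≤ B ^ k := pow_le_pow_right₀ hB1 (Nat.sub_le k a)
  have hBk : B ^ k = (4 * (k:ℝ)) ^ k * t ^ (-(1/2) : ℝ) := by
    have h3 : (t ^ (-ε)) ^ (k : ℕ) = t ^ ((-ε) * k) := by
      rw [Real.rpow_mul h0.le, Real.rpow_natCast]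
    have h4 : (-ε) * k = -(1/2 : ℝ) := by
      rw [hεdef]; field_simp
    rw [hBdef, mul_pow, h3, h4]
  have htm : t ^ m ≤ t := by
    have := pow_le_pow_of_le_one h0.le ht1 hm
    simpa using this
  have hfin : (4 * (k:ℝ)) ^ k * t ^ (-(1/2):ℝ) * t ≤ (4 * k) ^ k := by
    have ht12 : t ^ (-(1/2):ℝ) * t = t ^ ((1/2):ℝ) := by
      nth_rewrite 2 [← Real.rpow_one t]
      rw [← Real.rpow_add h0]
      norm_num
    have : t ^ ((1/2):ℝ) ≤ 1 := Real.rpow_le_one h0.le ht1 (by norm_num)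
    calc (4 * (k:ℝ)) ^ k * t ^ (-(1/2):ℝ) * t = (4*(k:ℝ))^k * (t ^ ((1/2):ℝ)) := by
          rw [mul_assoc, ht12]
      _ ≤ (4*(k:ℝ))^k * 1 := by
          apply mul_le_mul_of_nonneg_left this (by positivity)
      _ = (4 * (k:ℝ)) ^ k := mul_one _
  calc K0 t ^ (k-a) * t ^ m ≤ B ^ k * t := by
        apply mul_le_mul (h1.trans h2) htm (by positivity)
        exact pow_nonneg (le_trans zero_le_one hB1) k
    _ = (4 * (k:ℝ)) ^ k * t ^ (-(1/2):ℝ) * t := by rw [hBk]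
    _ ≤ (4 * k) ^ k := by exact_mod_cast hfin

lemma f_pos {k a m : ℕ} {t : ℝ} (h0 : 0 < t) :
    0 < I0 t ^ a * K0 t ^ (k - a) * t ^ m :=
  mul_pos (mul_pos (pow_pos (I0_pos t) a) (pow_pos (K0_pos h0) _)) (pow_pos h0 m)

lemma f_integrableOn {k a m : ℕ} (ha : 1 ≤ a) (hak : 2 * a + 1 ≤ k) (hm : 1 ≤ m) :
    IntegrableOn (fun t => I0 t ^ a * K0 t ^ (k - a) * t ^ m) (Set.Ioi (0:ℝ)) := by
  have hk1 : 1 ≤ k := by omega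
  have hcont : ContinuousOn (fun t => I0 t ^ a * K0 t ^ (k - a) * t ^ m) (Set.Ioi (0:ℝ)) :=
    ((I0_continuous.continuousOn.pow a).mul (K0_continuousOn.pow _)).mul
      (continuous_pow m).continuousOn
  rw [← Set.Ioc_union_Ioi_eq_Ioi (zero_le_one : (0:ℝ) ≤ 1)]
  apply IntegrableOn.union
  · -- on Ioc 0 1
    apply Integrable.mono' (g := fun _ => Real.exp 1 ^ a * (4 * (k:ℝ)) ^ k)
    · show IntegrableOn _ _ _
      rw [integrableOn_const_iff]
      exact Or.inr measure_Ioc_lt_top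
    · exact (hcont.mono Set.Ioc_subset_Ioi_self).aestronglyMeasurable measurableSet_Ioc
    · filter_upwards [ae_restrict_mem measurableSet_Ioc] with t ht
      obtain ⟨h0, h1⟩ := ht
      rw [Real.norm_eq_abs, abs_of_pos (f_pos h0)]
      have hI : I0 t ^ a ≤ Real.exp 1 ^ a :=
        pow_le_pow_left₀ (I0_pos t).le
          ((I0_le_exp h0.le).trans (Real.exp_le_exp.2 h1)) a
      have hK := K0_pow_small (a := a) (m := m) hk1 hm h0 h1
      calc I0 t ^ a * K0 t ^ (k-a) * t ^ m
          = I0 t ^ a * (K0 t ^ (k-a) * t ^ m) := by ring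
        _ ≤ Real.exp 1 ^ a * (4 * (k:ℝ)) ^ k := by
            apply mul_le_mul hI _ _ (by positivity)
            · exact_mod_cast hK
            · have := K0_pos h0
              positivity
  · -- on Ioi 1
    set D : ℝ := cKc + 1 with hDdef
    have hD1 : (1:ℝ) ≤ D := by have := cKc_nonneg; rw [hDdef]; linarith
    apply Integrable.mono'
      (g := fun t => D ^ k * (Real.exp (-t) * t ^ ((m:ℝ) + 1 - 1)))
    · exact ((Real.GammaIntegral_convergent (s := (m:ℝ)+1) (by positivity)).mono_set
        (Set.Ioi_subset_Ioi zero_le_one)).const_mul _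
    · exact (hcont.mono (Set.Ioi_subset_Ioi zero_le_one)).aestronglyMeasurable measurableSet_Ioi
    · filter_upwards [ae_restrict_mem measurableSet_Ioi] with t ht
      have h0 : (0:ℝ) < t := lt_trans one_pos ht
      rw [Real.norm_eq_abs, abs_of_pos (f_pos h0)]
      have hKD : K0 t ≤ D * Real.exp (-t) := by
        have h1 := K0_le_exp ht.le
        have h2 : cKc * Real.exp (-t) ≤ D * Real.exp (-t) := by
          apply mul_le_mul_of_nonneg_right _ (Real.exp_pos _).le
          rw [hDdef]; linarith
        linarith
      have hK' : K0 t ^ (k-a) ≤ (D * Real.exp (-t)) ^ (k-a) :=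
        pow_le_pow_left₀ (K0_pos h0).le hKD _
      have hI' : I0 t ^ a ≤ Real.exp t ^ a :=
        pow_le_pow_left₀ (I0_pos t).le (I0_le_exp h0.le) a
      have hcast : ((k - a : ℕ):ℝ) = (k:ℝ) - a := by
        rw [Nat.cast_sub (by omega)]
      have hexp : Real.exp t ^ a * Real.exp (-t) ^ (k - a) ≤ Real.exp (-t) := by
        rw [← Real.exp_nat_mul, ← Real.exp_nat_mul, ← Real.exp_add, Real.exp_le_exp, hcast]
        have hcast2 : (2 * (a:ℝ) + 1) ≤ (k:ℝ) := by exact_mod_cast hak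
        nlinarith
      have hDk : D ^ (k - a) ≤ D ^ k := pow_le_pow_right₀ hD1 (Nat.sub_le k a)
      have htm : (t:ℝ) ^ m = t ^ ((m:ℝ) + 1 - 1) := by
        rw [show (m:ℝ) + 1 - 1 = ((m:ℕ):ℝ) by ring, Real.rpow_natCast]
      calc I0 t ^ a * K0 t ^ (k-a) * t ^ m
          ≤ Real.exp t ^ a * (D * Real.exp (-t)) ^ (k-a) * t ^ m := by
            apply mul_le_mul_of_nonneg_right _ (by positivity)
            apply mul_le_mul hI' hK' (pow_nonneg (K0_pos h0).le _) (by positivity)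
        _ = (D ^ (k-a)) * (Real.exp t ^ a * Real.exp (-t) ^ (k-a)) * t ^ m := by
            rw [mul_pow]; ring
        _ ≤ D ^ k * Real.exp (-t) * t ^ m := by
            apply mul_le_mul_of_nonneg_right _ (by positivity)
            apply mul_le_mul hDk hexp (by positivity)
              (pow_nonneg (by linarith [cKc_nonneg] : (0:ℝ) ≤ D) k)
        _ = D ^ k * (Real.exp (-t) * t ^ ((m:ℝ)+1-1)) := by rw [← htm]; ring


variable {μ : Measure ℝ} [SigmaFinite μ]

lemma my_integrable_pi {n : ℕ} {f : Fin n → ℝ → ℝ}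
    (hf : ∀ i, Integrable (f i) μ) :
    Integrable (fun x : Fin n → ℝ => ∏ i, f i (x i)) (Measure.pi fun _ => μ) := by
  induction n with
  | zero =>
      simp only [Finset.univ_eq_empty, Finset.prod_empty]
      rw [integrable_const_iff]
      right
      rw [Measure.pi_of_empty fun _ => μ]
      infer_instance
  | succ n n_ih =>
      have hmp := ((measurePreserving_piFinSuccAbove (fun _ : Fin (n+1) => μ) 0).symm)
      rw [← hmp.integrable_comp_emb (MeasurableEquiv.measurableEmbedding _)]
      simp_rw [MeasurableEquiv.piFinSuccAbove_symm_apply, Fin.insertNthEquiv,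
        Fin.prod_univ_succ, Fin.insertNth_zero]
      simp only [Fin.zero_succAbove, Function.comp_def, Fin.cons_zero, Fin.cons_succ,
        Equiv.coe_fn_mk]
      have h2 : Integrable (fun x : Fin n → ℝ => ∏ j, f (Fin.succ j) (x j))
          (Measure.pi fun _ => μ) := n_ih (fun i => hf _)
      exact Integrable.mul_prod (hf 0) h2

lemma my_integral_pi {n : ℕ} (f : Fin n → ℝ → ℝ) :
    ∫ x : Fin n → ℝ, ∏ i, f i (x i) ∂(Measure.pi fun _ => μ) = ∏ i, ∫ x, f i x ∂μ := by
  induction n with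
  | zero =>
      simp only [Finset.univ_eq_empty, Finset.prod_empty, integral_const, smul_eq_mul, mul_one]
      rw [Measure.pi_of_empty fun _ => μ]
      simp
  | succ n n_ih =>
      calc
        _ = ∫ x : ℝ × (Fin n → ℝ),
            f 0 x.1 * ∏ i : Fin n, f (Fin.succ i) (x.2 i) ∂(μ.prod (Measure.pi fun _ => μ)) := by
          rw [← ((measurePreserving_piFinSuccAbove
            (fun _ : Fin (n+1) => μ) 0).symm).integral_comp']
          simp_rw [MeasurableEquiv.piFinSuccAbove_symm_apply, Fin.insertNthEquiv,
            Fin.prod_univ_succ, Fin.insertNth_zero]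
          simp only [Fin.zero_succAbove, Function.comp_def, Fin.cons_zero, Fin.cons_succ,
            Equiv.coe_fn_mk, cast_eq]
        _ = (∫ x, f 0 x ∂μ) * ∏ i : Fin n, ∫ x, f (Fin.succ i) x ∂μ := by
          rw [← n_ih, ← integral_prod_mul]
        _ = ∏ i, ∫ x, f i x ∂μ := by rw [Fin.prod_univ_succ]

lemma my_integral_perm {n : ℕ} (τ : Equiv.Perm (Fin n)) {H : (Fin n → ℝ) → ℝ}
    (hH : AEStronglyMeasurable H (Measure.pi fun _ : Fin n => μ)) :
    ∫ x : Fin n → ℝ, H (x ∘ τ) ∂(Measure.pi fun _ => μ)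
      = ∫ x : Fin n → ℝ, H x ∂(Measure.pi fun _ => μ) := by
  have hmp := measurePreserving_piCongrLeft (fun _ : Fin n => μ) τ.symm
  have heq : ∀ x : Fin n → ℝ,
      (MeasurableEquiv.piCongrLeft (fun _ => ℝ) τ.symm) x = x ∘ τ := by
    intro x
    funext j
    simp [MeasurableEquiv.piCongrLeft, Equiv.piCongrLeft, Equiv.piCongrLeft']
  have h2 := hmp.integral_comp' (g := H)
  simp_rw [heq] at h2
  exact h2

lemma my_integrable_perm {n : ℕ} (τ : Equiv.Perm (Fin n)) {H : (Fin n → ℝ) → ℝ}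
    (hH : Integrable H (Measure.pi fun _ : Fin n => μ)) :
    Integrable (fun x : Fin n → ℝ => H (x ∘ τ)) (Measure.pi fun _ => μ) := by
  have hmp := measurePreserving_piCongrLeft (fun _ : Fin n => μ) τ.symm
  have heq : ∀ x : Fin n → ℝ,
      (MeasurableEquiv.piCongrLeft (fun _ => ℝ) τ.symm) x = x ∘ τ := by
    intro x
    funext j
    simp [MeasurableEquiv.piCongrLeft, Equiv.piCongrLeft, Equiv.piCongrLeft']
  have := (hmp.integrable_comp_emb (MeasurableEquiv.measurableEmbedding _)).2 hH
  simpa [Function.comp_def, heq] using this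

noncomputable def sgn {n : ℕ} (σ : Equiv.Perm (Fin n)) : ℝ := ((Equiv.Perm.sign σ : ℤ) : ℝ)

lemma sgn_sq {n : ℕ} (σ : Equiv.Perm (Fin n)) : sgn σ * sgn σ = 1 := by
  rcases Int.units_eq_one_or (Equiv.Perm.sign σ) with h | h <;> simp [sgn, h]

lemma sgn_inv {n : ℕ} (σ : Equiv.Perm (Fin n)) : sgn σ⁻¹ = sgn σ := by
  simp [sgn]

lemma det_sum {n : ℕ} (M : Matrix (Fin n) (Fin n) ℝ) :
    M.det = ∑ σ : Equiv.Perm (Fin n), sgn σ * ∏ i, M (σ i) i := by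
  rw [Matrix.det_apply]
  apply Finset.sum_congr rfl
  intro σ _
  rw [Units.smul_def, zsmul_eq_mul]
  rfl

section Andreief

variable {n : ℕ} (φ ψ : Fin n → ℝ → ℝ)

private noncomputable def Hf : (Fin n → ℝ) → ℝ := fun x =>
  (Matrix.of fun a b : Fin n => φ a (x b)).det * ∏ i, ψ i (x i)

lemma Hf_eq (x : Fin n → ℝ) :
    Hf φ ψ x = ∑ σ : Equiv.Perm (Fin n), sgn σ * ∏ i, (φ (σ i) (x i) * ψ i (x i)) := by
  rw [Hf, det_sum, Finset.sum_mul]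
  apply Finset.sum_congr rfl
  intro σ _
  rw [Finset.prod_mul_distrib]
  simp only [Matrix.of_apply]
  ring

variable {μ : Measure ℝ} [SigmaFinite μ]
variable (hint : ∀ a b, Integrable (fun t => φ a t * ψ b t) μ)

include hint in
lemma Hf_integrable : Integrable (Hf φ ψ) (Measure.pi fun _ : Fin n => μ) := by
  have : Hf φ ψ = fun x =>
      ∑ σ : Equiv.Perm (Fin n), sgn σ * ∏ i, (φ (σ i) (x i) * ψ i (x i)) := by
    funext x; exact Hf_eq φ ψ x
  rw [this]
  apply integrable_finset_sum
  intro σ _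
  exact (my_integrable_pi (f := fun i t => φ (σ i) t * ψ i t) (fun i => hint _ _)).const_mul _

include hint in
lemma Hf_integral :
    ∫ x : Fin n → ℝ, Hf φ ψ x ∂(Measure.pi fun _ => μ)
      = (Matrix.of fun a b : Fin n => ∫ t, φ a t * ψ b t ∂μ).det := by
  simp_rw [Hf_eq]
  rw [integral_finset_sum _ (fun σ _ =>
    (my_integrable_pi (f := fun i t => φ (σ i) t * ψ i t) (fun i => hint _ _)).const_mul _)]
  rw [det_sum]
  apply Finset.sum_congr rfl
  intro σ _
  rw [integral_const_mul, my_integral_pi (f := fun i t => φ (σ i) t * ψ i t)]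
  rfl

lemma Hf_perm_sum (x : Fin n → ℝ) :
    ∑ τ : Equiv.Perm (Fin n), Hf φ ψ (x ∘ τ)
      = (Matrix.of fun a b : Fin n => φ a (x b)).det *
        (Matrix.of fun a b : Fin n => ψ a (x b)).det := by
  have hdet : ∀ τ : Equiv.Perm (Fin n),
      (Matrix.of fun a b : Fin n => φ a ((x ∘ τ) b)).det
        = sgn τ * (Matrix.of fun a b : Fin n => φ a (x b)).det := by
    intro τ
    have := Matrix.det_permute' τ (Matrix.of fun a b : Fin n => φ a (x b))
    have h2 : (Matrix.of fun a b : Fin n => φ a (x b)).submatrix id τ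
        = Matrix.of fun a b : Fin n => φ a ((x ∘ τ) b) := by
      ext a b
      simp [Matrix.submatrix_apply]
    rw [h2] at this
    rw [this]
    rfl
  have hprod : ∀ τ : Equiv.Perm (Fin n),
      (∏ i, ψ i ((x ∘ τ) i)) = ∏ j, ψ (τ⁻¹ j) (x j) := by
    intro τ
    have := Equiv.prod_comp τ (fun j => ψ (τ⁻¹ j) (x j))
    rw [← this]
    apply Finset.prod_congr rfl
    intro i _
    simp
  calc ∑ τ : Equiv.Perm (Fin n), Hf φ ψ (x ∘ τ)
      = ∑ τ : Equiv.Perm (Fin n), (Matrix.of fun a b : Fin n => φ a (x b)).det *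
          (sgn τ * ∏ j, ψ (τ⁻¹ j) (x j)) := by
        apply Finset.sum_congr rfl
        intro τ _
        rw [Hf, hdet τ, hprod τ]
        ring
    _ = (Matrix.of fun a b : Fin n => φ a (x b)).det *
          ∑ τ : Equiv.Perm (Fin n), sgn τ * ∏ j, ψ (τ⁻¹ j) (x j) := by
        rw [Finset.mul_sum]
    _ = (Matrix.of fun a b : Fin n => φ a (x b)).det *
        (Matrix.of fun a b : Fin n => ψ a (x b)).det := by
        congr 1
        rw [det_sum]
        simp only [Matrix.of_apply]
        rw [← Equiv.sum_comp (Equiv.inv (Equiv.Perm (Fin n)))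
          (fun σ => sgn σ * ∏ j, ψ (σ j) (x j))]
        apply Finset.sum_congr rfl
        intro τ _
        simp only [Equiv.inv_apply, sgn_inv]

include hint in
lemma andreief :
    (n.factorial : ℝ) * (Matrix.of fun a b : Fin n => ∫ t, φ a t * ψ b t ∂μ).det
      = ∫ x : Fin n → ℝ, (Matrix.of fun a b : Fin n => φ a (x b)).det *
          (Matrix.of fun a b : Fin n => ψ a (x b)).det ∂(Measure.pi fun _ => μ) := by
  have hHi := Hf_integrable φ ψ hint
  have key : ∀ τ : Equiv.Perm (Fin n),
      ∫ x : Fin n → ℝ, Hf φ ψ (x ∘ τ) ∂(Measure.pi fun _ => μ)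
        = (Matrix.of fun a b : Fin n => ∫ t, φ a t * ψ b t ∂μ).det := by
    intro τ
    rw [my_integral_perm τ hHi.aestronglyMeasurable, Hf_integral φ ψ hint]
  calc (n.factorial : ℝ) * (Matrix.of fun a b : Fin n => ∫ t, φ a t * ψ b t ∂μ).det
      = ∑ τ : Equiv.Perm (Fin n),
          ∫ x : Fin n → ℝ, Hf φ ψ (x ∘ τ) ∂(Measure.pi fun _ => μ) := by
        rw [Finset.sum_congr rfl (fun τ _ => key τ), Finset.sum_const, Finset.card_univ,
          Fintype.card_perm, Fintype.card_fin, nsmul_eq_mul]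
    _ = ∫ x : Fin n → ℝ, ∑ τ : Equiv.Perm (Fin n), Hf φ ψ (x ∘ τ)
          ∂(Measure.pi fun _ => μ) := by
        rw [integral_finset_sum _ (fun τ _ => my_integrable_perm τ hHi)]
    _ = _ := by
        apply integral_congr_ae
        exact Filter.Eventually.of_forall fun x => Hf_perm_sum φ ψ x

end Andreief





lemma vals_det_pos {n : ℕ} {c v : Fin n → ℝ} (hv : StrictMono v) (hc : ∀ b, 0 < c b) :
    0 < (Matrix.of fun a b : Fin n => c b * v b ^ (a : ℕ)).det := by
  have hmat : (Matrix.of fun a b : Fin n => c b * v b ^ (a : ℕ))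
      = Matrix.of fun a b : Fin n => c b * (Matrix.vandermonde v)ᵀ a b := by
    ext a b
    simp [Matrix.vandermonde]
  rw [hmat, Matrix.det_mul_row c (Matrix.vandermonde v)ᵀ, Matrix.det_transpose,
    Matrix.det_vandermonde]
  apply mul_pos
  · exact Finset.prod_pos fun b _ => hc b
  · apply Finset.prod_pos
    intro i _
    apply Finset.prod_pos
    intro j hj
    rw [Finset.mem_Ioi] at hj
    exact sub_pos.2 (hv hj)

lemma detPhi_pos (k : ℕ) {n : ℕ} (hkn : ∀ a : Fin n, 2 * ((a:ℕ)+1) + 1 ≤ k)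
    {s : Fin n → ℝ} (hs : StrictMono s) (hpos : ∀ b, 0 < s b) :
    0 < (Matrix.of fun a b : Fin n =>
      I0 (s b) ^ ((a:ℕ)+1) * K0 (s b) ^ (k - ((a:ℕ)+1))).det := by
  have hK : ∀ b, 0 < K0 (s b) := fun b => K0_pos (hpos b)
  have hI : ∀ b, 0 < I0 (s b) := fun b => I0_pos (s b)
  have hmat : (Matrix.of fun a b : Fin n =>
      I0 (s b) ^ ((a:ℕ)+1) * K0 (s b) ^ (k - ((a:ℕ)+1)))
      = Matrix.of fun a b : Fin n =>
        (I0 (s b) * K0 (s b) ^ (k-1)) * (I0 (s b) / K0 (s b)) ^ (a:ℕ) := by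
    ext a b
    have ha1 : (a:ℕ) ≤ k - 1 := by have := hkn a; omega
    have e1 : k - ((a:ℕ)+1) = (k-1) - (a:ℕ) := by omega
    simp only [Matrix.of_apply]
    rw [e1, pow_sub₀ _ (hK b).ne' ha1, div_pow]
    field_simp
    ring
  rw [hmat]
  apply vals_det_pos
  · intro b b' hbb'
    have h1 : I0 (s b) ≤ I0 (s b') := I0_mono (hpos b).le (hs hbb').le
    have h2 : K0 (s b') < K0 (s b) := K0_strictAnti (hpos b) (hs hbb')
    rw [div_lt_div_iff₀ (hK b) (hK b')]
    calc I0 (s b) * K0 (s b') ≤ I0 (s b') * K0 (s b') :=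
          mul_le_mul_of_nonneg_right h1 (hK b').le
      _ < I0 (s b') * K0 (s b) := by
          exact mul_lt_mul_of_pos_left h2 (hI b')
  · intro b
    exact mul_pos (hI b) (pow_pos (hK b) _)

lemma detPsi_pos {n : ℕ} {s : Fin n → ℝ} (hs : StrictMono s) (hpos : ∀ b, 0 < s b) :
    0 < (Matrix.of fun j b : Fin n => s b ^ (2*((j:ℕ)+1)-1)).det := by
  have hmat : (Matrix.of fun j b : Fin n => s b ^ (2*((j:ℕ)+1)-1))
      = Matrix.of fun j b : Fin n => s b * (s b ^ 2) ^ (j:ℕ) := by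
    ext j b
    simp only [Matrix.of_apply]
    rw [show 2*((j:ℕ)+1)-1 = 2*(j:ℕ)+1 by omega, pow_succ, pow_mul]
    ring
  rw [hmat]
  apply vals_det_pos
  · intro b b' hbb'
    exact pow_lt_pow_left₀ (hs hbb') (hpos b).le two_ne_zero
  · exact hpos


lemma G_nonneg (k : ℕ) {n : ℕ} (hkn : ∀ a : Fin n, 2 * ((a:ℕ)+1) + 1 ≤ k)
    (x : Fin n → ℝ) (hx : ∀ i, 0 < x i) :
    0 ≤ (Matrix.of fun a b : Fin n =>
        I0 (x b) ^ ((a:ℕ)+1) * K0 (x b) ^ (k - ((a:ℕ)+1))).det *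
      (Matrix.of fun a b : Fin n => (x b) ^ (2*((a:ℕ)+1)-1)).det ∧
    (Function.Injective x →
      0 < (Matrix.of fun a b : Fin n =>
          I0 (x b) ^ ((a:ℕ)+1) * K0 (x b) ^ (k - ((a:ℕ)+1))).det *
        (Matrix.of fun a b : Fin n => (x b) ^ (2*((a:ℕ)+1)-1)).det) := by
  by_cases hinj : Function.Injective x
  · suffices hpos : 0 < (Matrix.of fun a b : Fin n =>
          I0 (x b) ^ ((a:ℕ)+1) * K0 (x b) ^ (k - ((a:ℕ)+1))).det *
        (Matrix.of fun a b : Fin n => (x b) ^ (2*((a:ℕ)+1)-1)).det by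
      exact ⟨hpos.le, fun _ => hpos⟩
    set σ := Tuple.sort x with hσ
    have hmono : Monotone (x ∘ σ) := Tuple.monotone_sort x
    have hsm : StrictMono (x ∘ σ) :=
      hmono.strictMono_of_injective (hinj.comp σ.injective)
    have hppos : ∀ b, 0 < (x ∘ σ) b := fun b => hx _
    have hΦ := detPhi_pos k hkn hsm hppos
    have hΨ := detPsi_pos hsm hppos
    have hsubΦ : (Matrix.of fun a b : Fin n =>
        I0 ((x ∘ σ) b) ^ ((a:ℕ)+1) * K0 ((x ∘ σ) b) ^ (k - ((a:ℕ)+1)))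
        = (Matrix.of fun a b : Fin n =>
            I0 (x b) ^ ((a:ℕ)+1) * K0 (x b) ^ (k - ((a:ℕ)+1))).submatrix id σ := by
      ext a b; simp [Matrix.submatrix_apply]
    have hsubΨ : (Matrix.of fun a b : Fin n => ((x ∘ σ) b) ^ (2*((a:ℕ)+1)-1))
        = (Matrix.of fun a b : Fin n => (x b) ^ (2*((a:ℕ)+1)-1)).submatrix id σ := by
      ext a b; simp [Matrix.submatrix_apply]
    rw [hsubΦ, Matrix.det_permute' σ] at hΦ
    rw [hsubΨ, Matrix.det_permute' σ] at hΨ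
    have hkey : ((Equiv.Perm.sign σ : ℤ) : ℝ) *
          (Matrix.of fun a b : Fin n =>
            I0 (x b) ^ ((a:ℕ)+1) * K0 (x b) ^ (k - ((a:ℕ)+1))).det *
        (((Equiv.Perm.sign σ : ℤ) : ℝ) *
          (Matrix.of fun a b : Fin n => (x b) ^ (2*((a:ℕ)+1)-1)).det) > 0 := by
      exact mul_pos hΦ hΨ
    have hsq := sgn_sq σ
    rw [sgn] at hsq
    nlinarith [hkey, hsq]
  · rw [Function.not_injective_iff] at hinj
    obtain ⟨b, b', hbb', hne⟩ := hinj
    have hz : (Matrix.of fun a b : Fin n => (x b) ^ (2*((a:ℕ)+1)-1)).det = 0 := by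
      apply Matrix.det_zero_of_column_eq hne
      intro a
      simp [hbb']
    rw [hz, mul_zero]
    exact ⟨le_refl 0, fun hi => absurd (hi hbb') hne⟩

theorem stmt_18 (k : ℕ) (hk : 3 ≤ k) :
    IsUnit (Matrix.of fun i j : Fin ((k - 1) / 2) =>
      ∫ t in Set.Ioi (0 : ℝ),
        I0 t ^ ((i : ℕ) + 1) * K0 t ^ (k - ((i : ℕ) + 1)) * t ^ (2 * ((j : ℕ) + 1) - 1)) := by
  set n := (k - 1) / 2 with hn
  have hkn : ∀ a : Fin n, 2 * ((a:ℕ)+1) + 1 ≤ k := by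
    intro a
    have h1 : (a:ℕ) < n := a.isLt
    have h2 : n * 2 ≤ k - 1 := Nat.div_mul_le_self (k-1) 2
    omega
  set μ : Measure ℝ := volume.restrict (Set.Ioi (0:ℝ)) with hμ
  set P : Measure (Fin n → ℝ) := Measure.pi fun _ => μ with hP
  set φ : Fin n → ℝ → ℝ := fun a t => I0 t ^ ((a:ℕ)+1) * K0 t ^ (k - ((a:ℕ)+1)) with hφ
  set ψ : Fin n → ℝ → ℝ := fun j t => t ^ (2*((j:ℕ)+1)-1) with hψ
  have hint : ∀ a b : Fin n, Integrable (fun t => φ a t * ψ b t) μ := by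
    intro a b
    have h := f_integrableOn (k := k) (a := (a:ℕ)+1) (m := 2*((b:ℕ)+1)-1)
      (by omega) (by have := hkn a; omega) (by omega)
    exact h
  rw [show (Matrix.of fun i j : Fin n =>
      ∫ t in Set.Ioi (0:ℝ),
        I0 t ^ ((i:ℕ)+1) * K0 t ^ (k - ((i:ℕ)+1)) * t ^ (2*((j:ℕ)+1)-1))
    = Matrix.of fun a b : Fin n => ∫ t, φ a t * ψ b t ∂μ from rfl]
  rw [Matrix.isUnit_iff_isUnit_det, isUnit_iff_ne_zero]
  have hand := andreief φ ψ hint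
  set G : (Fin n → ℝ) → ℝ := fun x =>
    (Matrix.of fun a b : Fin n => φ a (x b)).det *
    (Matrix.of fun a b : Fin n => ψ a (x b)).det with hG
  have hGint : Integrable G P := by
    have hGeq : G = fun x => ∑ τ : Equiv.Perm (Fin n), Hf φ ψ (x ∘ τ) := by
      funext x
      rw [hG]
      exact (Hf_perm_sum φ ψ x).symm
    rw [hGeq]
    exact integrable_finset_sum _ (fun τ _ => my_integrable_perm τ (Hf_integrable φ ψ hint))
  have hae : ∀ᵐ x ∂P, ∀ i, 0 < x i := by
    rw [ae_all_iff]
    intro i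
    rw [ae_iff]
    have hnull : μ {t : ℝ | ¬ 0 < t} = 0 := by
      have hIic : {t : ℝ | ¬ 0 < t} = Set.Iic 0 := by
        ext t; simp [not_lt]
      rw [hIic, hμ, Measure.restrict_apply measurableSet_Iic]
      have : Set.Iic (0:ℝ) ∩ Set.Ioi 0 = ∅ := by
        ext t
        simp only [Set.mem_inter_iff, Set.mem_Iic, Set.mem_Ioi, Set.mem_empty_iff_false,
          iff_false, not_and, not_lt]
        exact fun h => h
      rw [this]
      simp
    exact Measure.pi_eval_preimage_null (fun _ => μ) hnull
  have hnonneg : 0 ≤ᵐ[P] G := by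
    filter_upwards [hae] with x hx
    simp only [Pi.zero_apply]
    exact (G_nonneg k hkn x hx).1
  have hposint : 0 < ∫ x, G x ∂P := by
    rw [integral_pos_iff_support_of_nonneg_ae hnonneg hGint]
    set S : Set (Fin n → ℝ) :=
      Set.pi Set.univ (fun i : Fin n => Set.Ioo (((i:ℕ):ℝ)+1) (((i:ℕ):ℝ)+2)) with hS
    have hmeasS : P S = 1 := by
      rw [hS, hP, Measure.pi_pi]
      have hone : ∀ i : Fin n, μ (Set.Ioo (((i:ℕ):ℝ)+1) (((i:ℕ):ℝ)+2)) = 1 := by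
        intro i
        rw [hμ, Measure.restrict_apply measurableSet_Ioo]
        have hsub : Set.Ioo (((i:ℕ):ℝ)+1) (((i:ℕ):ℝ)+2) ⊆ Set.Ioi 0 := by
          intro y hy
          have : (0:ℝ) < ((i:ℕ):ℝ)+1 := by positivity
          exact lt_trans this hy.1
        rw [Set.inter_eq_left.2 hsub, Real.volume_Ioo]
        norm_num
      simp [hone]
    have hSsub : S ⊆ Function.support G := by
      intro x hxS
      have hmem : ∀ i : Fin n, x i ∈ Set.Ioo (((i:ℕ):ℝ)+1) (((i:ℕ):ℝ)+2) :=
        fun i => Set.mem_pi.1 hxS i (Set.mem_univ i)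
      have hx : ∀ i, 0 < x i := by
        intro i
        have h1 := (hmem i).1
        have : (0:ℝ) < ((i:ℕ):ℝ)+1 := by positivity
        linarith
      have hinj : Function.Injective x := by
        intro i j hij
        by_contra hne
        have hvne : (i:ℕ) ≠ (j:ℕ) := fun h => hne (Fin.ext h)
        rcases Nat.lt_or_ge (i:ℕ) (j:ℕ) with h | h
        · have h1 : x i < ((i:ℕ):ℝ)+2 := (hmem i).2
          have h2 : ((j:ℕ):ℝ)+1 < x j := (hmem j).1
          have h3 : ((i:ℕ):ℝ)+2 ≤ ((j:ℕ):ℝ)+1 := by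
            have : (i:ℕ)+1 ≤ (j:ℕ) := h
            have hc : ((i:ℕ):ℝ)+1 ≤ ((j:ℕ):ℝ) := by exact_mod_cast this
            linarith
          linarith [hij.le, hij.ge]
        · have hlt : (j:ℕ) < (i:ℕ) := by omega
          have h1 : x j < ((j:ℕ):ℝ)+2 := (hmem j).2
          have h2 : ((i:ℕ):ℝ)+1 < x i := (hmem i).1
          have h3 : ((j:ℕ):ℝ)+2 ≤ ((i:ℕ):ℝ)+1 := by
            have : (j:ℕ)+1 ≤ (i:ℕ) := hlt
            have hc : ((j:ℕ):ℝ)+1 ≤ ((i:ℕ):ℝ) := by exact_mod_cast this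
            linarith
          linarith [hij.le, hij.ge]
      have hGx : 0 < G x := (G_nonneg k hkn x hx).2 hinj
      exact Function.mem_support.2 hGx.ne'
    calc (0:ENNReal) < 1 := by norm_num
      _ = P S := hmeasS.symm
      _ ≤ P (Function.support G) := measure_mono hSsub
  intro hdet
  rw [hdet, mul_zero] at hand
  rw [hG] at hposint
  rw [← hand] at hposint
  exact lt_irrefl 0 hposint
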